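/- Let S and T be disjoint finite sets of real numbers, with demand functions α : S → ℕ and β : T → ℕ, and let M be a minimum-cost matching between S and T satisfying the demands. If a, c ∈ S and b, d ∈ T are points with a ≤ b < c ≤ d and (a, d) ∈ M, then (a, b) ∈ M or (c, d) ∈ M (or both). -/

import Mathlib

open Finset

/-- `M` is a matching between `S` and `T`: a finite set of ordered pairs `(s, t)`
with `s ∈ S` and `t ∈ T`. -/
def IsMatching (S T : Finset ℝ) (M : Finset (ℝ × ℝ)) : Prop :=
  ∀ p ∈ M, p.1 ∈ S ∧ p.2 ∈ T

/-- The cost of a matching: the sum of `|s - t|` over its pairs. -/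
noncomputable def matchCost (M : Finset (ℝ × ℝ)) : ℝ :=
  ∑ p ∈ M, |p.1 - p.2|

/-- The degree of a point `x`: the number of pairs of `M` containing `x`. -/
noncomputable def matchDeg (M : Finset (ℝ × ℝ)) (x : ℝ) : ℕ :=
  (M.filter (fun q => q.1 = x ∨ q.2 = x)).card

/-- `M` satisfies the demands `α` on `S` and `β` on `T`. -/
def SatisfiesDemands (S T : Finset ℝ) (α β : ℝ → ℕ) (M : Finset (ℝ × ℝ)) : Prop :=
  (∀ s ∈ S, α s ≤ matchDeg M s) ∧ (∀ t ∈ T, β t ≤ matchDeg M t)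

/-- `M` is a minimum-cost matching between `S` and `T` satisfying the demands. -/
def IsMinCostMatching (S T : Finset ℝ) (α β : ℝ → ℕ) (M : Finset (ℝ × ℝ)) : Prop :=
  IsMatching S T M ∧ SatisfiesDemands S T α β M ∧
    ∀ M' : Finset (ℝ × ℝ), IsMatching S T M' → SatisfiesDemands S T α β M' →
      matchCost M ≤ matchCost M'

/-- Lemma 2: if a minimum-cost matching with demands contains `(a, d)` with
`a ≤ b < c ≤ d`, `a, c ∈ S`, `b, d ∈ T`, then it contains `(a, b)` or `(c, d)`. -/
theorem stmt_1 (S T : Finset ℝ) (hST : Disjoint S T) (α β : ℝ → ℕ)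
    (M : Finset (ℝ × ℝ)) (hM : IsMinCostMatching S T α β M)
    (a c b d : ℝ) (ha : a ∈ S) (hc : c ∈ S) (hb : b ∈ T) (hd : d ∈ T)
    (hab : a ≤ b) (hbc : b < c) (hcd : c ≤ d)
    (had : (a, d) ∈ M) :
    (a, b) ∈ M ∨ (c, d) ∈ M := by
  by_contra h
  push_neg at h
  obtain ⟨hab', hcd'⟩ := h
  obtain ⟨hmatch, hdem, hmin⟩ := hM
  have hac : a < c := lt_of_le_of_lt hab hbc
  have hbd : b < d := lt_of_lt_of_le hbc hcd
  have had2 : a < d := hac.trans_le hcd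
  set M' : Finset (ℝ × ℝ) := insert (a,b) (insert (c,d) (M.erase (a,d))) with hM'
  have hne : ((a,b) : ℝ×ℝ) ≠ (c,d) := by simp [hac.ne]
  have hnotin2 : ((c,d):ℝ×ℝ) ∉ M.erase (a,d) := fun h => hcd' (Finset.mem_of_mem_erase h)
  have hnotin1 : ((a,b):ℝ×ℝ) ∉ insert (c,d) (M.erase (a,d)) := by
    simp only [Finset.mem_insert]
    rintro (h | h)
    · exact hne h
    · exact hab' (Finset.mem_of_mem_erase h)
  -- degrees don't decrease
  have hdeg : ∀ x, matchDeg M x ≤ matchDeg M' x := by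
    intro x
    unfold matchDeg
    apply Finset.card_le_card_of_injOn
      (fun p => if p = (a,d) then (if x = a then (a,b) else (c,d)) else p)
    · intro p hp
      simp only [Finset.mem_coe, Finset.mem_filter] at hp ⊢
      by_cases hpe : p = (a,d)
      · rw [if_pos hpe]
        by_cases hxa : x = a
        · rw [if_pos hxa]
          exact ⟨by simp [hM'], Or.inl hxa.symm⟩
        · rw [if_neg hxa]
          have hxd : x = d := by
            rw [hpe] at hp
            rcases hp.2 with h1 | h1
            · exact absurd h1.symm hxa
            · exact h1.symm
          exact ⟨by simp [hM'], Or.inr hxd.symm⟩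
      · constructor
        · simp only [hpe, if_false, hM', Finset.mem_insert, Finset.mem_erase]
          right; right; exact ⟨hpe, hp.1⟩
        · simpa [hpe] using hp.2
    · intro p hp q hq hpq
      simp only [Finset.mem_coe, Finset.mem_filter] at hp hq
      by_cases hpe : p = (a,d) <;> by_cases hqe : q = (a,d)
      · rw [hpe, hqe]
      · exfalso
        simp only [hpe, hqe, if_true, if_false] at hpq
        by_cases hxa : x = a
        · rw [if_pos hxa] at hpq; exact hab' (hpq ▸ hq.1)
        · rw [if_neg hxa] at hpq; exact hcd' (hpq ▸ hq.1)
      · exfalso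
        simp only [hpe, hqe, if_true, if_false] at hpq
        by_cases hxa : x = a
        · rw [if_pos hxa] at hpq; exact hab' (hpq ▸ hp.1)
        · rw [if_neg hxa] at hpq; exact hcd' (hpq ▸ hp.1)
      · simpa [hpe, hqe] using hpq
  -- M' is a matching
  have hmatch' : IsMatching S T M' := by
    intro p hp
    simp only [hM', Finset.mem_insert, Finset.mem_erase] at hp
    rcases hp with h | h | ⟨_, h⟩
    · subst h; exact ⟨ha, hb⟩
    · subst h; exact ⟨hc, hd⟩
    · exact hmatch p h
  have hdem' : SatisfiesDemands S T α β M' :=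
    ⟨fun s hs => (hdem.1 s hs).trans (hdeg s), fun t ht => (hdem.2 t ht).trans (hdeg t)⟩
  have hcost' : matchCost M' < matchCost M := by
    have e1 : matchCost M' = |a - b| + (|c - d| + matchCost (M.erase (a,d))) := by
      unfold matchCost
      rw [hM', Finset.sum_insert hnotin1, Finset.sum_insert hnotin2]
    have e2 : matchCost M = |a - d| + matchCost (M.erase (a,d)) := by
      unfold matchCost
      rw [← Finset.add_sum_erase M _ had]
    rw [e1, e2]
    have h1 : |a - b| = b - a := by rw [abs_sub_comm]; exact abs_of_nonneg (by linarith)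
    have h2 : |c - d| = d - c := by rw [abs_sub_comm]; exact abs_of_nonneg (by linarith)
    have h3 : |a - d| = d - a := by rw [abs_sub_comm]; exact abs_of_nonneg (by linarith)
    rw [h1, h2, h3]; linarith
  exact absurd (hmin M' hmatch' hdem') (not_le.mpr hcost')
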